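/- Let c₁, u₁, s₁, c₂, u₂, s₂ ∈ ℝ² with u₁, s₁ linearly independent and u₂, s₂ linearly independent. Let |N₁| = {c₁ + p·u₁ + q·s₁ : p,q ∈ [-1,1]}, N₁^{le} = {c₁ - u₁ + q·s₁ : q ∈ [-1,1]}, N₁^{re} = {c₁ + u₁ + q·s₁ : q ∈ [-1,1]}, int(N₂^l) = {c₂ + p·u₂ + q·s₂ : p < -1}, int(N₂^r) = {c₂ + p·u₂ + q·s₂ : p > 1}, int|N₂| = {c₂ + p·u₂ + q·s₂ : p,q ∈ (-1,1)}, and N₂⁺ = {c₂ + p·u₂ + q·s₂ : p ∈ [-1,1], q ∈ ℝ∖(-1,1)}. Let f : |N₁| → ℝ² be continuous and injective, let γ(t) = c₁ + t·u₁, let A be the 2×2 matrix with columns u₂ and s₂, and let g(t) = A⁻¹·(f(γ(t)) - c₂). Assume: (b+) f(N₁^{le}) ⊆ int(N₂^l) and f(N₁^{re}) ⊆ int(N₂^r); (a1) the first coordinate g₁ of g is strictly increasing on [-1,1]; (a2) there exists t₀ ∈ (-1,1) with f(γ(t₀)) ∈ int|N₂|; (a3) f(|N₁|) ∩ N₂⁺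 = ∅. Then there exist t_*, t* with -1 < t_* < t₀ < t* < 1 such that f(γ(t)) ∈ int(N₂^l) for all t ∈ [-1, t_*), f(γ(t)) ∈ int(N₂^r) for all t ∈ (t*, 1], and f(γ(t)) ∈ int|N₂| for all t ∈ (t_*, t*). -/
import Mathlib


/-- The support `|N| = c_N([-1,1] × [-1,1])` of the h-set `t(c,u,s)`. -/
def hsetSupport (c u s : Fin 2 → ℝ) : Set (Fin 2 → ℝ) :=
  {x | ∃ p ∈ Set.Icc (-1 : ℝ) 1, ∃ q ∈ Set.Icc (-1 : ℝ) 1, x = c + p • u + q • s}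

/-- The left edge `N^{le} = c_N({-1} × [-1,1])`. -/
def hsetLeftEdge (c u s : Fin 2 → ℝ) : Set (Fin 2 → ℝ) :=
  {x | ∃ q ∈ Set.Icc (-1 : ℝ) 1, x = c - u + q • s}

/-- The right edge `N^{re} = c_N({1} × [-1,1])`. -/
def hsetRightEdge (c u s : Fin 2 → ℝ) : Set (Fin 2 → ℝ) :=
  {x | ∃ q ∈ Set.Icc (-1 : ℝ) 1, x = c + u + q • s}

/-- The interior of the left side, `int(N^l) = c_N((-∞,-1) × ℝ)`. -/
def hsetIntLeft (c u s : Fin 2 → ℝ) : Set (Fin 2 → ℝ) :=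
  {x | ∃ p : ℝ, p < -1 ∧ ∃ q : ℝ, x = c + p • u + q • s}

/-- The interior of the right side, `int(N^r) = c_N((1,∞) × ℝ)`. -/
def hsetIntRight (c u s : Fin 2 → ℝ) : Set (Fin 2 → ℝ) :=
  {x | ∃ p : ℝ, 1 < p ∧ ∃ q : ℝ, x = c + p • u + q • s}

/-- The interior of the support, `int|N| = c_N((-1,1) × (-1,1))`. -/
def hsetIntSupport (c u s : Fin 2 → ℝ) : Set (Fin 2 → ℝ) :=
  {x | ∃ p ∈ Set.Ioo (-1 : ℝ) 1, ∃ q ∈ Set.Ioo (-1 : ℝ) 1, x = c + p • u + q • s}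

/-- The set `N⁺ = c_N([-1,1] × (ℝ ∖ (-1,1)))`. -/
def hsetPlus (c u s : Fin 2 → ℝ) : Set (Fin 2 → ℝ) :=
  {x | ∃ p ∈ Set.Icc (-1 : ℝ) 1, ∃ q ∈ (Set.Ioo (-1 : ℝ) 1)ᶜ, x = c + p • u + q • s}

lemma aux_mulVec (A : Matrix (Fin 2) (Fin 2) ℝ) (u s : Fin 2 → ℝ)
    (hA : ∀ i, A i 0 = u i ∧ A i 1 = s i) (v : Fin 2 → ℝ) :
    A.mulVec v = v 0 • u + v 1 • s := by
  funext i
  simp [Matrix.mulVec, dotProduct, Fin.sum_univ_two, (hA i).1, (hA i).2,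
    mul_comm]


/-- Crossing structure in the proof of Lemma odwrotne: under conditions b+, a1, a2, a3
for a continuous injection `f` on `|N₁|`, the image of the horizontal central line `γ`
of `|N₁|` stays in `int(N₂^l)` before time `t_*`, in `int|N₂|` on `(t_*, t^*)` and in
`int(N₂^r)` after `t^*`. -/
theorem central_line_crossing
    (c₁ u₁ s₁ c₂ u₂ s₂ : Fin 2 → ℝ)
    (h₁ : LinearIndependent ℝ ![u₁, s₁]) (h₂ : LinearIndependent ℝ ![u₂, s₂])
    (f : (Fin 2 → ℝ) → Fin 2 → ℝ)
    (hf : ContinuousOn f (hsetSupport c₁ u₁ s₁))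
    (hinj : Set.InjOn f (hsetSupport c₁ u₁ s₁))
    (A : Matrix (Fin 2) (Fin 2) ℝ)
    (hA : ∀ i, A i 0 = u₂ i ∧ A i 1 = s₂ i)
    (hbplus : f '' hsetLeftEdge c₁ u₁ s₁ ⊆ hsetIntLeft c₂ u₂ s₂ ∧
        f '' hsetRightEdge c₁ u₁ s₁ ⊆ hsetIntRight c₂ u₂ s₂)
    (ha1 : StrictMonoOn (fun t : ℝ => A⁻¹.mulVec (f (c₁ + t • u₁) - c₂) 0)
        (Set.Icc (-1 : ℝ) 1))
    (t₀ : ℝ) (ht₀ : t₀ ∈ Set.Ioo (-1 : ℝ) 1)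
    (ha2 : f (c₁ + t₀ • u₁) ∈ hsetIntSupport c₂ u₂ s₂)
    (ha3 : f '' hsetSupport c₁ u₁ s₁ ∩ hsetPlus c₂ u₂ s₂ = ∅) :
    ∃ tstar tStar : ℝ, -1 < tstar ∧ tstar < t₀ ∧ t₀ < tStar ∧ tStar < 1 ∧
      (∀ t ∈ Set.Ico (-1 : ℝ) tstar, f (c₁ + t • u₁) ∈ hsetIntLeft c₂ u₂ s₂) ∧
      (∀ t ∈ Set.Ioc tStar (1 : ℝ), f (c₁ + t • u₁) ∈ hsetIntRight c₂ u₂ s₂) ∧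
      (∀ t ∈ Set.Ioo tstar tStar, f (c₁ + t • u₁) ∈ hsetIntSupport c₂ u₂ s₂) := by
  obtain ⟨hbl, hbr⟩ := hbplus
  -- A is invertible
  have hdet : A.det ≠ 0 := by
    intro h
    obtain ⟨v, hv0, hv⟩ := (Matrix.exists_mulVec_eq_zero_iff).mpr h
    rw [aux_mulVec A u₂ s₂ hA] at hv
    obtain ⟨h0, h1⟩ := LinearIndependent.pair_iff.mp h₂ (v 0) (v 1) hv
    exact hv0 (funext fun i => by fin_cases i <;> assumption)
  have hAunit : IsUnit A.det := isUnit_iff_ne_zero.mpr hdet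
  have hinvA : A⁻¹ * A = 1 := Matrix.nonsing_inv_mul A hAunit
  have hAinv : A * A⁻¹ = 1 := Matrix.mul_nonsing_inv A hAunit
  -- coordinates are determined
  have coord_eq : ∀ (x : Fin 2 → ℝ) (p q : ℝ), x = c₂ + p • u₂ + q • s₂ →
      A⁻¹.mulVec (x - c₂) = ![p, q] := by
    intro x p q hx
    have hx' : x - c₂ = A.mulVec ![p, q] := by
      rw [aux_mulVec A u₂ s₂ hA]
      simp [hx]
      abel
    rw [hx', Matrix.mulVec_mulVec, hinvA, Matrix.one_mulVec]
  -- representation of any point in the coordinates of N₂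
  have coord_repr : ∀ x : Fin 2 → ℝ,
      x = c₂ + (A⁻¹.mulVec (x - c₂) 0) • u₂ + (A⁻¹.mulVec (x - c₂) 1) • s₂ := by
    intro x
    have h1 : A.mulVec (A⁻¹.mulVec (x - c₂)) = x - c₂ := by
      rw [Matrix.mulVec_mulVec, hAinv, Matrix.one_mulVec]
    have h2 := aux_mulVec A u₂ s₂ hA (A⁻¹.mulVec (x - c₂))
    rw [h1] at h2
    rw [add_assoc, ← h2]
    abel
  -- the first coordinate of the curve
  set G : ℝ → ℝ := fun t => A⁻¹.mulVec (f (c₁ + t • u₁) - c₂) 0 with hG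
  -- gamma stays in the support
  have hγmem : ∀ t ∈ Set.Icc (-1 : ℝ) 1, c₁ + t • u₁ ∈ hsetSupport c₁ u₁ s₁ := by
    intro t ht
    exact ⟨t, ht, 0, ⟨by norm_num, by norm_num⟩, by simp⟩
  -- continuity of G on [-1,1]
  have hγcont : Continuous fun t : ℝ => c₁ + t • u₁ := by fun_prop
  have hfγ : ContinuousOn (fun t : ℝ => f (c₁ + t • u₁)) (Set.Icc (-1 : ℝ) 1) :=
    hf.comp hγcont.continuousOn hγmem
  have hcont : ContinuousOn G (Set.Icc (-1 : ℝ) 1) := by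
    have h0 : Continuous fun x : Fin 2 → ℝ => A⁻¹.mulVec (x - c₂) 0 := by
      simp only [Matrix.mulVec, dotProduct, Fin.sum_univ_two]
      fun_prop
    exact h0.comp_continuousOn hfγ
  -- values of G at endpoints and t₀
  have hgm1 : G (-1) < -1 := by
    have hle : c₁ + (-1 : ℝ) • u₁ ∈ hsetLeftEdge c₁ u₁ s₁ := by
      refine ⟨0, ⟨by norm_num, by norm_num⟩, ?_⟩
      simp [sub_eq_add_neg]
    obtain ⟨p, hp, q, hx⟩ := hbl ⟨_, hle, rfl⟩
    have hGe : G (-1) = p := by rw [hG]; simp only [coord_eq _ p q hx]; rfl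
    rw [hGe]; exact hp
  have hg1 : 1 < G 1 := by
    have hre : c₁ + (1 : ℝ) • u₁ ∈ hsetRightEdge c₁ u₁ s₁ := by
      refine ⟨0, ⟨by norm_num, by norm_num⟩, ?_⟩
      simp
    obtain ⟨p, hp, q, hx⟩ := hbr ⟨_, hre, rfl⟩
    have hGe : G 1 = p := by rw [hG]; simp only [coord_eq _ p q hx]; rfl
    rw [hGe]; exact hp
  obtain ⟨p₀, hp₀, q₀, hq₀, hx₀⟩ := ha2
  have hgt₀ : G t₀ = p₀ := by rw [hG]; simp only [coord_eq _ p₀ q₀ hx₀]; rfl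
  have ht₀Icc : t₀ ∈ Set.Icc (-1 : ℝ) 1 := ⟨ht₀.1.le, ht₀.2.le⟩
  -- intermediate value theorem on both sides of t₀
  obtain ⟨tstar, htstar, hgtstar⟩ : ∃ t ∈ Set.Ioo (-1 : ℝ) t₀, G t = -1 := by
    have hsub : Set.Icc (-1 : ℝ) t₀ ⊆ Set.Icc (-1 : ℝ) 1 :=
      Set.Icc_subset_Icc le_rfl ht₀.2.le
    have h := intermediate_value_Ioo (le_of_lt ht₀.1) (hcont.mono hsub)
    have hm : (-1 : ℝ) ∈ Set.Ioo (G (-1)) (G t₀) := ⟨hgm1, by rw [hgt₀]; exact hp₀.1⟩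
    obtain ⟨t, ht, hgt⟩ := h hm
    exact ⟨t, ht, hgt⟩
  obtain ⟨tStar, htStar, hgtStar⟩ : ∃ t ∈ Set.Ioo t₀ (1 : ℝ), G t = 1 := by
    have hsub : Set.Icc t₀ (1 : ℝ) ⊆ Set.Icc (-1 : ℝ) 1 :=
      Set.Icc_subset_Icc ht₀.1.le le_rfl
    have h := intermediate_value_Ioo (le_of_lt ht₀.2) (hcont.mono hsub)
    have hm : (1 : ℝ) ∈ Set.Ioo (G t₀) (G 1) := ⟨by rw [hgt₀]; exact hp₀.2, hg1⟩
    obtain ⟨t, ht, hgt⟩ := h hm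
    exact ⟨t, ht, hgt⟩
  have htstarIcc : tstar ∈ Set.Icc (-1 : ℝ) 1 :=
    ⟨htstar.1.le, htstar.2.le.trans ht₀.2.le⟩
  have htStarIcc : tStar ∈ Set.Icc (-1 : ℝ) 1 :=
    ⟨ht₀.1.le.trans htStar.1.le, htStar.2.le⟩
  refine ⟨tstar, tStar, htstar.1, htstar.2, htStar.1, htStar.2, ?_, ?_, ?_⟩
  · -- before tstar : in int left
    intro t ht
    have htIcc : t ∈ Set.Icc (-1 : ℝ) 1 := ⟨ht.1, le_trans ht.2.le htstarIcc.2⟩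
    have hlt : G t < -1 := by
      rcases eq_or_lt_of_le ht.1 with h | h
      · rw [← h]; exact hgm1
      · have := ha1 htIcc htstarIcc ht.2
        rwa [hgtstar] at this
    exact ⟨G t, hlt, A⁻¹.mulVec (f (c₁ + t • u₁) - c₂) 1, coord_repr _⟩
  · -- after tStar : in int right
    intro t ht
    have htIcc : t ∈ Set.Icc (-1 : ℝ) 1 := ⟨le_trans htStarIcc.1 ht.1.le, ht.2⟩
    have hlt : 1 < G t := by
      have := ha1 htStarIcc htIcc ht.1
      rwa [hgtStar] at this
    exact ⟨G t, hlt, A⁻¹.mulVec (f (c₁ + t • u₁) - c₂) 1, coord_repr _⟩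
  · -- between : in int support
    intro t ht
    have htIcc : t ∈ Set.Icc (-1 : ℝ) 1 :=
      ⟨le_trans htstarIcc.1 ht.1.le, le_trans ht.2.le htStarIcc.2⟩
    have hp : G t ∈ Set.Ioo (-1 : ℝ) 1 := by
      constructor
      · have := ha1 htstarIcc htIcc ht.1
        rwa [hgtstar] at this
      · have := ha1 htIcc htStarIcc ht.2
        rwa [hgtStar] at this
    have hq : A⁻¹.mulVec (f (c₁ + t • u₁) - c₂) 1 ∈ Set.Ioo (-1 : ℝ) 1 := by
      by_contra hqn
      have hmem : f (c₁ + t • u₁) ∈ f '' hsetSupport c₁ u₁ s₁ ∩ hsetPlus c₂ u₂ s₂ :=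
        ⟨⟨_, hγmem t htIcc, rfl⟩, ⟨G t, ⟨hp.1.le, hp.2.le⟩, _, hqn, coord_repr _⟩⟩
      rw [ha3] at hmem
      exact hmem
    exact ⟨G t, hp, _, hq, coord_repr _⟩
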